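/- For every l ∈ L and v ∈ F, exactly one of the following holds: (type α) {⟨l,v⟩, ⟨l,ι(v)⟩} = {0,2}, or (type β) ⟨l,v⟩ = ⟨l,ι(v)⟩ = 1. Moreover, the pair (l,v) is of type α if and only if there exists a ∈ L with l + a = v or l + a = ι(v). Finally, G acts transitively on the set of pairs (l̄,[v]) ∈ L̄ × F̄ of type α, and transitively on the set of pairs of type β (the type depends only on the classes l̄ ∈ L̄ and [v] ∈ F̄). -/

import Mathlib

/-- The lattice ℤ⁸. -/
abbrev V : Type := Fin 8 → ℤ

/-- The bilinear form with Gram matrix diag(1,−1,…,−1). -/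
def B (v w : V) : ℤ := v 0 * w 0 - ∑ i : Fin 7, v i.succ * w i.succ

/-- The class h = (3,−1,…,−1) with ⟨h,h⟩ = 2. -/
def hh : V := ![3, -1, -1, -1, -1, -1, -1, -1]

/-- The involution ι(v) = ⟨v,h⟩·h − v. -/
def iota (v : V) : V := B v hh • hh - v

/-- L = {v : ⟨v,v⟩ = −1, ⟨v,h⟩ = 1}. -/
def L : Set V := {v | B v v = -1 ∧ B v hh = 1}

/-- F = {v : ⟨v,v⟩ = 0, ⟨v,h⟩ = 2}. -/
def F : Set V := {v | B v v = 0 ∧ B v hh = 2}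

/-- L̄ = L/⟨ι⟩, realized as the set of ι-orbits. -/
def Lbar : Set (Set V) := {p | ∃ v ∈ L, p = {v, iota v}}

/-- F̄ = F/⟨ι⟩, realized as the set of ι-orbits. -/
def Fbar : Set (Set V) := {p | ∃ v ∈ F, p = {v, iota v}}

/-- G = {g ∈ GL₈(ℤ) : g preserves B and g(h) = h}. -/
def G : Subgroup (V ≃ₗ[ℤ] V) where
  carrier := {g | (∀ v w : V, B (g v) (g w) = B v w) ∧ g hh = hh}
  one_mem' := ⟨fun _ _ => rfl, rfl⟩
  mul_mem' := by
    rintro a b ⟨ha1, ha2⟩ ⟨hb1, hb2⟩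
    refine ⟨fun v w => ?_, ?_⟩
    · show B (a (b v)) (a (b w)) = B v w
      rw [ha1, hb1]
    · show a (b hh) = hh
      rw [hb2, ha2]
  inv_mem' := by
    rintro a ⟨ha1, ha2⟩
    refine ⟨fun v w => ?_, ?_⟩
    · show B (a.symm v) (a.symm w) = B v w
      conv_rhs => rw [← a.apply_symm_apply v, ← a.apply_symm_apply w]
      rw [ha1]
    · show a.symm hh = hh
      conv_lhs => rw [← ha2]
      exact a.symm_apply_apply hh

/-- Type α for a pair (l,v) ∈ L × F: intersection numbers {0,2}. -/
def TypeAlpha (l v : V) : Prop :=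
  (B l v = 0 ∧ B l (iota v) = 2) ∨ (B l v = 2 ∧ B l (iota v) = 0)

/-- Type β for a pair (l,v) ∈ L × F: both intersection numbers equal 1. -/
def TypeBeta (l v : V) : Prop := B l v = 1 ∧ B l (iota v) = 1

open Finset Equiv

/-! ### Bilinearity basics -/

lemma B_symm (v w : V) : B v w = B w v := by
  unfold B; rw [mul_comm]; congr 1; exact Finset.sum_congr rfl fun i _ => mul_comm _ _
lemma B_add_left (u v w : V) : B (u + v) w = B u w + B v w := by
  unfold B; simp only [Pi.add_apply, add_mul, Finset.sum_add_distrib]; ring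
lemma B_add_right (u v w : V) : B u (v + w) = B u v + B u w := by
  rw [B_symm, B_add_left, B_symm v u, B_symm w u]
lemma B_smul_left (c : ℤ) (v w : V) : B (c • v) w = c * B v w := by
  unfold B; simp only [Pi.smul_apply, smul_eq_mul, mul_assoc, ← Finset.mul_sum]; ring
lemma B_smul_right (c : ℤ) (v w : V) : B v (c • w) = c * B v w := by
  rw [B_symm, B_smul_left, B_symm]
lemma B_sub_left (u v w : V) : B (u - v) w = B u w - B v w := by
  unfold B; simp only [Pi.sub_apply, sub_mul, Finset.sum_sub_distrib]; ring
lemma B_sub_right (u v w : V) : B u (v - w) = B u v - B u w := by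
  rw [B_symm, B_sub_left, B_symm v u, B_symm w u]

lemma B_hh_hh : B hh hh = 2 := by decide

lemma B_iota_right (x y : V) : B x (iota y) = B y hh * B x hh - B x y := by
  unfold iota; rw [B_sub_right, B_smul_right]
lemma B_iota_left (x y : V) : B (iota x) y = B x hh * B hh y - B x y := by
  unfold iota; rw [B_sub_left, B_smul_left]
lemma iota_iota (v : V) : iota (iota v) = v := by
  have h : B (iota v) hh = B v hh := by
    rw [B_iota_left, B_hh_hh]; ring
  rw [iota, h, iota, sub_sub_cancel]

lemma iota_mem_F {v : V} (hv : v ∈ F) : iota v ∈ F := by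
  obtain ⟨h1, h2⟩ := hv
  constructor
  · show B (iota v) (iota v) = 0
    rw [B_iota_right, B_iota_left, B_iota_left, B_hh_hh, B_symm hh v, h1, h2]; ring
  · show B (iota v) hh = 2
    rw [B_iota_left, B_hh_hh, h2]; ring

lemma iota_mem_L {v : V} (hv : v ∈ L) : iota v ∈ L := by
  obtain ⟨h1, h2⟩ := hv
  constructor
  · show B (iota v) (iota v) = -1
    rw [B_iota_right, B_iota_left, B_iota_left, B_hh_hh, B_symm hh v, h1, h2]; ring
  · show B (iota v) hh = 1
    rw [B_iota_left, B_hh_hh, h2]; ring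

lemma hh_succ (i : Fin 7) : hh i.succ = -1 := by fin_cases i <;> rfl

def tl (v : V) : Fin 7 → ℤ := fun i => v i.succ
def tail6 (v : V) : Fin 6 → ℤ := fun i => v i.succ.succ

lemma Bh (v : V) : B v hh = 3 * v 0 + ∑ i, tl v i := by
  unfold B tl
  rw [show hh 0 = 3 from rfl]
  rw [Finset.sum_congr rfl (fun i _ => by rw [hh_succ i, mul_neg_one])]
  rw [Finset.sum_neg_distrib]
  ring

lemma Bq (v : V) : B v v = v 0 ^ 2 - ∑ i, (tl v i)^2 := by
  unfold B tl
  rw [sq]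
  congr 1
  exact Finset.sum_congr rfl fun i _ => (sq (v i.succ)).symm

/-! ### permutation and reflection elements of G -/

def permAct (σ : Equiv.Perm (Fin 7)) : V ≃ₗ[ℤ] V where
  toFun v := fun i => Fin.cases (v 0) (fun j => v (σ j).succ) i
  invFun v := fun i => Fin.cases (v 0) (fun j => v (σ⁻¹ j).succ) i
  map_add' u v := funext fun i => by cases i using Fin.cases <;> simp
  map_smul' c v := funext fun i => by cases i using Fin.cases <;> simp
  left_inv v := funext fun i => by cases i using Fin.cases <;> simp
  right_inv v := funext fun i => by cases i using Fin.cases <;> simp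

@[simp] lemma permAct_zero (σ : Equiv.Perm (Fin 7)) (v : V) : permAct σ v 0 = v 0 := rfl
@[simp] lemma permAct_succ (σ : Equiv.Perm (Fin 7)) (v : V) (j : Fin 7) :
    permAct σ v j.succ = v (σ j).succ := rfl

lemma permAct_mem (σ : Equiv.Perm (Fin 7)) : permAct σ ∈ G := by
  constructor
  · intro v w
    show (permAct σ v 0) * (permAct σ w 0)
        - ∑ i : Fin 7, (permAct σ v i.succ) * (permAct σ w i.succ) = B v w
    simp only [permAct_zero, permAct_succ]
    unfold B
    congr 1
    exact Equiv.sum_comp σ (fun i => v i.succ * w i.succ)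
  · funext i
    cases i using Fin.cases with
    | zero => rfl
    | succ j => show hh (σ j).succ = hh j.succ; rw [hh_succ, hh_succ]

def reflV (r : V) (hr : B r r = -2) : V ≃ₗ[ℤ] V where
  toFun x := x + B x r • r
  invFun x := x + B x r • r
  map_add' x y := by
    show (x + y) + B (x + y) r • r = (x + B x r • r) + (y + B y r • r)
    rw [B_add_left, add_smul]; abel
  map_smul' c x := by
    show (c • x) + B (c • x) r • r = c • (x + B x r • r)
    rw [B_smul_left, mul_smul, smul_add]
  left_inv x := by
    show (x + B x r • r) + B (x + B x r • r) r • r = x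
    have h1 : B (x + B x r • r) r = - B x r := by
      rw [B_add_left, B_smul_left, hr]; ring
    rw [h1, add_assoc, ← add_smul]
    simp
  right_inv x := by
    show (x + B x r • r) + B (x + B x r • r) r • r = x
    have h1 : B (x + B x r • r) r = - B x r := by
      rw [B_add_left, B_smul_left, hr]; ring
    rw [h1, add_assoc, ← add_smul]
    simp

lemma reflV_mem (r : V) (hr : B r r = -2) (hrh : B r hh = 0) : reflV r hr ∈ G := by
  constructor
  · intro v w
    show B (v + B v r • r) (w + B w r • r) = B v w
    rw [B_add_left, B_add_right, B_add_right, B_smul_left, B_smul_right, B_smul_right,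
      B_smul_left, hr, B_symm r w]
    ring
  · show hh + B hh r • r = hh
    rw [B_symm, hrh]
    simp

lemma mulApply (a b : V ≃ₗ[ℤ] V) (x : V) : (a * b) x = a (b x) := rfl
lemma invApply (a : V ≃ₗ[ℤ] V) (x : V) : a⁻¹ x = a.symm x := rfl

lemma g_iota (g : V ≃ₗ[ℤ] V) (hg : g ∈ G) (x : V) : g (iota x) = iota (g x) := by
  unfold iota
  rw [map_sub, map_smul]
  have h1 : g hh = hh := hg.2
  have h2 : B x hh = B (g x) hh := by conv_rhs => rw [← h1, hg.1]
  rw [h1, ← h2]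

/-! ### counting machinery -/

def cnt {n : ℕ} (f : Fin n → ℤ) (c : ℤ) : ℕ := (Finset.univ.filter fun i => f i = c).card

lemma cnt_comp {n : ℕ} (f : Fin n → ℤ) (σ : Equiv.Perm (Fin n)) (c : ℤ) :
    cnt (f ∘ σ) c = cnt f c := by
  unfold cnt
  apply Finset.card_bij' (fun i _ => σ i) (fun i _ => σ.symm i)
  · intro a ha
    simp only [Finset.mem_filter, Finset.mem_univ, true_and] at ha ⊢
    exact ha
  · intro a ha
    simp only [Finset.mem_filter, Finset.mem_univ, true_and, Function.comp_apply] at ha ⊢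
    simpa using ha
  · intro a _; simp
  · intro a _; simp

lemma exists_perm : ∀ {n : ℕ} (f g : Fin n → ℤ),
    (∀ c, cnt f c = cnt g c) → ∃ σ : Equiv.Perm (Fin n), f = g ∘ σ := by
  intro n
  induction n with
  | zero => exact fun f g _ => ⟨1, funext fun i => i.elim0⟩
  | succ n ih =>
    intro f g h
    have h0 : 0 < cnt g (f 0) := by
      rw [← h]
      unfold cnt
      rw [Finset.card_pos]
      exact ⟨0, by simp⟩
    obtain ⟨j, hj⟩ : ∃ j, g j = f 0 := by
      obtain ⟨j, hj⟩ := Finset.card_pos.mp h0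
      exact ⟨j, (Finset.mem_filter.mp hj).2⟩
    set g' : Fin (n+1) → ℤ := g ∘ (Equiv.swap 0 j) with hg'
    have hg'0 : g' 0 = f 0 := by simp [hg', hj]
    have hcnt' : ∀ c, cnt g' c = cnt g c := fun c => cnt_comp g (Equiv.swap 0 j) c
    have hsplit : ∀ (u : Fin (n+1) → ℤ) (c : ℤ),
        cnt u c = (if u 0 = c then 1 else 0) + cnt (u ∘ Fin.succ) c := by
      intro u c
      unfold cnt
      rw [Finset.card_filter, Finset.card_filter, Fin.sum_univ_succ]
      rfl
    have htail : ∀ c, cnt (f ∘ Fin.succ) c = cnt (g' ∘ Fin.succ) c := by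
      intro c
      have e1 := hsplit f c
      have e2 := hsplit g' c
      have e3 := h c
      have e4 := hcnt' c
      rw [hg'0] at e2
      omega
    obtain ⟨τ, hτ⟩ := ih (f ∘ Fin.succ) (g' ∘ Fin.succ) htail
    refine ⟨Equiv.swap 0 j * Equiv.Perm.decomposeFin.symm (0, τ), funext fun i => ?_⟩
    cases i using Fin.cases with
    | zero =>
      show f 0 = g (Equiv.swap 0 j (Equiv.Perm.decomposeFin.symm (0, τ) 0))
      rw [Equiv.Perm.decomposeFin_symm_apply_zero]
      simp [hj]
    | succ i =>
      show f i.succ = g (Equiv.swap 0 j (Equiv.Perm.decomposeFin.symm (0, τ) i.succ))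
      rw [Equiv.Perm.decomposeFin_symm_apply_succ]
      have := congrFun hτ i
      simpa [hg'] using this

lemma fiber_sum {n : ℕ} (t : Fin n → ℤ) (S : Finset ℤ) (h : ∀ i, t i ∈ S) (F : ℤ → ℤ) :
    ∑ i, F (t i) = ∑ c ∈ S, (cnt t c : ℤ) * F c := by
  rw [← Finset.sum_fiberwise_of_maps_to (fun i _ => h i) (fun i => F (t i))]
  apply Finset.sum_congr rfl
  intro c _
  rw [Finset.sum_congr rfl (fun i hi => by rw [(Finset.mem_filter.mp hi).2])]
  rw [Finset.sum_const, nsmul_eq_mul]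
  rfl

lemma cnt_eq_all {n : ℕ} (f g : Fin n → ℤ) (S : Finset ℤ) (hf : ∀ i, f i ∈ S)
    (hg : ∀ i, g i ∈ S) (h : ∀ c ∈ S, cnt f c = cnt g c) (c : ℤ) : cnt f c = cnt g c := by
  by_cases hc : c ∈ S
  · exact h c hc
  · unfold cnt
    rw [Finset.filter_false_of_mem, Finset.filter_false_of_mem]
    · intro i _ hi; exact hc (hi ▸ hg i)
    · intro i _ hi; exact hc (hi ▸ hf i)

lemma match_counts {n : ℕ} (f g : Fin n → ℤ) (S : Finset ℤ) (hf : ∀ i, f i ∈ S)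
    (hg : ∀ i, g i ∈ S) (h : ∀ c ∈ S, cnt f c = cnt g c) :
    ∃ σ : Equiv.Perm (Fin n), f = g ∘ σ :=
  exists_perm f g (cnt_eq_all f g S hf hg h)

lemma cnt_facts2 {n : ℕ} (t : Fin n → ℤ) (x y : ℤ) (hxy : x ≠ y)
    (h : ∀ i, t i ∈ ({x, y} : Finset ℤ)) :
    (cnt t x : ℤ) + cnt t y = n ∧ x * cnt t x + y * cnt t y = ∑ i, t i := by
  have h1 := fiber_sum t {x, y} h (fun _ => 1)
  have h2 := fiber_sum t {x, y} h id
  rw [Finset.sum_pair hxy] at h1 h2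
  simp only [mul_one, id] at h1 h2
  constructor
  · rw [← h1]; simp
  · rw [h2]; ring

lemma cnt_facts3 {n : ℕ} (t : Fin n → ℤ) (x y z : ℤ) (hxy : x ≠ y) (hxz : x ≠ z) (hyz : y ≠ z)
    (h : ∀ i, t i ∈ ({x, y, z} : Finset ℤ)) :
    (cnt t x : ℤ) + cnt t y + cnt t z = n ∧
    x * cnt t x + y * cnt t y + z * cnt t z = ∑ i, t i ∧
    x^2 * cnt t x + y^2 * cnt t y + z^2 * cnt t z = ∑ i, (t i)^2 := by
  have hx : x ∉ ({y, z} : Finset ℤ) := by simp [hxy, hxz]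
  have h1 := fiber_sum t {x, y, z} h (fun _ => 1)
  have h2 := fiber_sum t {x, y, z} h id
  have h3 := fiber_sum t {x, y, z} h (fun c => c^2)
  rw [show ({x, y, z} : Finset ℤ) = insert x {y, z} from rfl] at h1 h2 h3
  rw [Finset.sum_insert hx, Finset.sum_pair hyz] at h1 h2 h3
  simp only [mul_one, id] at h1 h2 h3
  refine ⟨?_, by rw [h2]; ring, by rw [h3]; ring⟩
  have : (∑ _i : Fin n, (1:ℤ)) = n := by simp
  rw [this] at h1
  omega

lemma coord_bound {a : Fin 7 → ℤ} {s q : ℤ} (hs : ∑ j, a j = s) (hq : ∑ j, (a j)^2 = q)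
    (i : Fin 7) : 7 * (a i)^2 - 2*s*(a i) + s^2 - 6*q ≤ 0 := by
  have h1 : ∑ j ∈ Finset.univ.erase i, a j = s - a i := by
    have := Finset.sum_erase_add Finset.univ a (Finset.mem_univ i)
    omega
  have h2 : ∑ j ∈ Finset.univ.erase i, (a j)^2 = q - (a i)^2 := by
    have := Finset.sum_erase_add Finset.univ (fun j => (a j)^2) (Finset.mem_univ i)
    omega
  have hcard : (Finset.univ.erase i).card = 6 := by
    rw [Finset.card_erase_of_mem (Finset.mem_univ i)]
    simp
  have cs := sq_sum_le_card_mul_sum_sq (s := Finset.univ.erase i) (f := a)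
  rw [h1, h2, hcard] at cs
  push_cast at cs
  nlinarith [cs]

lemma cs7 (a : Fin 7 → ℤ) : (∑ i, a i)^2 ≤ 7 * ∑ i, (a i)^2 := by
  have cs := sq_sum_le_card_mul_sum_sq (s := (Finset.univ : Finset (Fin 7))) (f := a)
  simpa using cs

/-! ### standard vectors -/

def A0 : V := ![0,1,0,0,0,0,0,0]
def A1 : V := ![1,-1,-1,0,0,0,0,0]
def A2 : V := ![2,-1,-1,-1,-1,-1,0,0]
def A3 : V := ![3,-2,-1,-1,-1,-1,-1,-1]
def Wa1 : V := ![1,0,-1,0,0,0,0,0]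
def Wa2 : V := ![2,0,-1,-1,-1,-1,0,0]
def Wa3 : V := ![3,0,-2,-1,-1,-1,-1,-1]
def Wb1 : V := ![1,-1,0,0,0,0,0,0]
def Wb2 : V := ![2,-1,-1,-1,-1,0,0,0]
def Wb3 : V := ![3,-1,-2,-1,-1,-1,-1,0]
def Wb4 : V := ![4,-1,-2,-2,-2,-1,-1,-1]
def Wb5 : V := ![5,-1,-2,-2,-2,-2,-2,-2]

lemma perm_tail7 (v W : V) (h0 : v 0 = W 0) (σ : Equiv.Perm (Fin 7))
    (hσ : tl W = tl v ∘ σ) : permAct σ v = W := by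
  funext i
  cases i using Fin.cases with
  | zero => exact h0
  | succ j => exact (congrFun hσ j).symm

/-- classification of L up to coordinate permutations -/
lemma L_struct (l : V) (hl : l ∈ L) :
    ∃ σ : Equiv.Perm (Fin 7),
      permAct σ l = A0 ∨ permAct σ l = A1 ∨ permAct σ l = A2 ∨ permAct σ l = A3 := by
  obtain ⟨h1, h2⟩ := hl
  rw [Bq] at h1
  rw [Bh] at h2
  have hs : ∑ i, tl l i = 1 - 3 * l 0 := by omega
  have hq : ∑ i, (tl l i)^2 = (l 0)^2 + 1 := by omega
  have hcs := cs7 (tl l)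
  rw [hs, hq] at hcs
  have hd0 : 0 ≤ l 0 := by nlinarith [sq_nonneg (l 0 + 1)]
  have hd3 : l 0 ≤ 3 := by nlinarith [sq_nonneg (l 0 - 4)]
  have hcases : l 0 = 0 ∨ l 0 = 1 ∨ l 0 = 2 ∨ l 0 = 3 := by omega
  rcases hcases with hd | hd | hd | hd
  · -- l 0 = 0 : one coordinate 1, rest 0
    rw [hd] at hs hq
    norm_num at hs hq
    have hm : ∀ i, tl l i ∈ ({1, 0} : Finset ℤ) := by
      intro i
      have hb := coord_bound hs hq i
      have hl1 : 0 ≤ tl l i := by nlinarith [sq_nonneg (tl l i + 1)]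
      have hl2 : tl l i ≤ 1 := by nlinarith [sq_nonneg (tl l i - 2)]
      simp only [Finset.mem_insert, Finset.mem_singleton]
      omega
    obtain ⟨c1, c2⟩ := cnt_facts2 (tl l) 1 0 (by decide) hm
    rw [hs] at c2
    have hx : cnt (tl l) 1 = 1 := by omega
    have hy : cnt (tl l) 0 = 6 := by omega
    obtain ⟨σ, hσ⟩ := match_counts (tl A0) (tl l) {1, 0} (by decide) hm
      (by intro c hc; fin_cases hc <;> simp only [hx, hy] <;> decide)
    exact ⟨σ, Or.inl (perm_tail7 l A0 (by rw [hd]; rfl) σ hσ)⟩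
  · -- l 0 = 1 : two coordinates -1, rest 0
    rw [hd] at hs hq
    norm_num at hs hq
    have hm : ∀ i, tl l i ∈ ({-1, 0} : Finset ℤ) := by
      intro i
      have hb := coord_bound hs hq i
      have hl1 : -1 ≤ tl l i := by nlinarith [sq_nonneg (tl l i + 2)]
      have hl2 : tl l i ≤ 0 := by nlinarith [sq_nonneg (tl l i - 1)]
      simp only [Finset.mem_insert, Finset.mem_singleton]
      omega
    obtain ⟨c1, c2⟩ := cnt_facts2 (tl l) (-1) 0 (by decide) hm
    rw [hs] at c2
    have hx : cnt (tl l) (-1) = 2 := by omega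
    have hy : cnt (tl l) 0 = 5 := by omega
    obtain ⟨σ, hσ⟩ := match_counts (tl A1) (tl l) {-1, 0} (by decide) hm
      (by intro c hc; fin_cases hc <;> simp only [hx, hy] <;> decide)
    exact ⟨σ, Or.inr (Or.inl (perm_tail7 l A1 (by rw [hd]; rfl) σ hσ))⟩
  · -- l 0 = 2 : five coordinates -1, rest 0
    rw [hd] at hs hq
    norm_num at hs hq
    have hm : ∀ i, tl l i ∈ ({-1, 0} : Finset ℤ) := by
      intro i
      have hb := coord_bound hs hq i
      have hl1 : -1 ≤ tl l i := by nlinarith [sq_nonneg (tl l i + 2)]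
      have hl2 : tl l i ≤ 0 := by nlinarith [sq_nonneg (tl l i - 1)]
      simp only [Finset.mem_insert, Finset.mem_singleton]
      omega
    obtain ⟨c1, c2⟩ := cnt_facts2 (tl l) (-1) 0 (by decide) hm
    rw [hs] at c2
    have hx : cnt (tl l) (-1) = 5 := by omega
    have hy : cnt (tl l) 0 = 2 := by omega
    obtain ⟨σ, hσ⟩ := match_counts (tl A2) (tl l) {-1, 0} (by decide) hm
      (by intro c hc; fin_cases hc <;> simp only [hx, hy] <;> decide)
    exact ⟨σ, Or.inr (Or.inr (Or.inl (perm_tail7 l A2 (by rw [hd]; rfl) σ hσ)))⟩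
  · -- l 0 = 3 : one -2, six -1
    rw [hd] at hs hq
    norm_num at hs hq
    have hm : ∀ i, tl l i ∈ ({-2, -1} : Finset ℤ) := by
      intro i
      have hb := coord_bound hs hq i
      have hl1 : -2 ≤ tl l i := by nlinarith [sq_nonneg (tl l i + 3)]
      have hl2 : tl l i ≤ -1 := by nlinarith [sq_nonneg (tl l i)]
      simp only [Finset.mem_insert, Finset.mem_singleton]
      omega
    obtain ⟨c1, c2⟩ := cnt_facts2 (tl l) (-2) (-1) (by decide) hm
    rw [hs] at c2
    have hx : cnt (tl l) (-2) = 1 := by omega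
    have hy : cnt (tl l) (-1) = 6 := by omega
    obtain ⟨σ, hσ⟩ := match_counts (tl A3) (tl l) {-2, -1} (by decide) hm
      (by intro c hc; fin_cases hc <;> simp only [hx, hy] <;> decide)
    exact ⟨σ, Or.inr (Or.inr (Or.inr (perm_tail7 l A3 (by rw [hd]; rfl) σ hσ)))⟩

/-! ### tail6 lift -/

lemma A0_ss (k : Fin 6) : A0 k.succ.succ = 0 := by fin_cases k <;> rfl

lemma perm_tail6 (v W : V) (h0 : v 0 = W 0) (h1 : v 1 = W 1) (τ : Equiv.Perm (Fin 6))
    (hτ : tail6 W = tail6 v ∘ τ) :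
    ∃ σ : Equiv.Perm (Fin 7), permAct σ v = W ∧ permAct σ A0 = A0 := by
  refine ⟨Equiv.Perm.decomposeFin.symm (0, τ), ?_, ?_⟩
  · funext i
    cases i using Fin.cases with
    | zero => exact h0
    | succ j =>
      cases j using Fin.cases with
      | zero =>
        show v ((Equiv.Perm.decomposeFin.symm (0, τ)) 0).succ = W (0:Fin 7).succ
        rw [Equiv.Perm.decomposeFin_symm_apply_zero]
        exact h1
      | succ k =>
        show v ((Equiv.Perm.decomposeFin.symm (0, τ)) k.succ).succ = W k.succ.succ
        rw [Equiv.Perm.decomposeFin_symm_apply_succ]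
        simp only [Equiv.swap_self, Equiv.coe_refl, id_eq]
        exact (congrFun hτ k).symm
  · funext i
    cases i using Fin.cases with
    | zero => rfl
    | succ j =>
      cases j using Fin.cases with
      | zero =>
        show A0 ((Equiv.Perm.decomposeFin.symm (0, τ)) 0).succ = A0 (0:Fin 7).succ
        rw [Equiv.Perm.decomposeFin_symm_apply_zero]
      | succ k =>
        show A0 ((Equiv.Perm.decomposeFin.symm (0, τ)) k.succ).succ = A0 k.succ.succ
        rw [Equiv.Perm.decomposeFin_symm_apply_succ]
        simp only [Equiv.swap_self, Equiv.coe_refl, id_eq]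
        rw [A0_ss, A0_ss]

lemma tl_zero (v : V) : tl v 0 = v 1 := rfl
lemma tail6_eq (v : V) (i : Fin 6) : tail6 v i = tl v i.succ := rfl

lemma sum_tail6 (v : V) : ∑ i, tl v i = v 1 + ∑ i, tail6 v i := Fin.sum_univ_succ _
lemma sumsq_tail6 (v : V) : ∑ i, (tl v i)^2 = (v 1)^2 + ∑ i, (tail6 v i)^2 :=
  Fin.sum_univ_succ _

/-- classification of F, α₀ case -/
lemma F_struct_alpha (v : V) (hv : v ∈ F) (h1 : v 1 = 0) :
    ∃ σ : Equiv.Perm (Fin 7),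
      (permAct σ v = Wa1 ∨ permAct σ v = Wa2 ∨ permAct σ v = Wa3) ∧ permAct σ A0 = A0 := by
  obtain ⟨hq1, hq2⟩ := hv
  rw [Bq] at hq1
  rw [Bh] at hq2
  have hs : ∑ i, tl v i = 2 - 3 * v 0 := by omega
  have hq : ∑ i, (tl v i)^2 = (v 0)^2 := by omega
  have hcs := cs7 (tl v)
  rw [hs, hq] at hcs
  have hd1 : 1 ≤ v 0 := by nlinarith [sq_nonneg (v 0)]
  have hd5 : v 0 ≤ 5 := by nlinarith [sq_nonneg (v 0 - 6)]
  have hcases : v 0 = 1 ∨ v 0 = 2 ∨ v 0 = 3 ∨ v 0 = 4 ∨ v 0 = 5 := by omega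
  have hs6 := sum_tail6 v
  have hq6 := sumsq_tail6 v
  rw [h1] at hs6 hq6
  norm_num at hs6 hq6
  rcases hcases with hd | hd | hd | hd | hd
  · -- d = 1 : tail6 has one -1, five 0
    rw [hd] at hs hq
    norm_num at hs hq
    have hm : ∀ i, tl v i ∈ ({-1, 0} : Finset ℤ) := by
      intro i
      have hb := coord_bound hs hq i
      have hb1 : -1 ≤ tl v i := by nlinarith [sq_nonneg (tl v i + 2)]
      have hb2 : tl v i ≤ 0 := by nlinarith [sq_nonneg (tl v i - 1)]
      simp only [Finset.mem_insert, Finset.mem_singleton]; omega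
    have hm6 : ∀ i, tail6 v i ∈ ({-1, 0} : Finset ℤ) := fun i => hm i.succ
    obtain ⟨c1, c2⟩ := cnt_facts2 (tail6 v) (-1) 0 (by decide) hm6
    rw [← hs6, hs] at c2
    have hx : cnt (tail6 v) (-1) = 1 := by omega
    have hy : cnt (tail6 v) 0 = 5 := by omega
    obtain ⟨τ, hτ⟩ := match_counts (tail6 Wa1) (tail6 v) {-1, 0} (by decide) hm6
      (by intro c hc; fin_cases hc <;> simp only [hx, hy] <;> decide)
    obtain ⟨σ, h₁, h₂⟩ := perm_tail6 v Wa1 (by rw [hd]; rfl) (by rw [h1]; rfl) τ hτ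
    exact ⟨σ, Or.inl h₁, h₂⟩
  · -- d = 2 : tail6 has four -1, two 0
    rw [hd] at hs hq
    norm_num at hs hq
    have hm : ∀ i, tl v i ∈ ({-1, 0} : Finset ℤ) := by
      intro i
      have hb := coord_bound hs hq i
      have hb1 : -1 ≤ tl v i := by nlinarith [sq_nonneg (tl v i + 2)]
      have hb2 : tl v i ≤ 0 := by nlinarith [sq_nonneg (tl v i - 1)]
      simp only [Finset.mem_insert, Finset.mem_singleton]; omega
    have hm6 : ∀ i, tail6 v i ∈ ({-1, 0} : Finset ℤ) := fun i => hm i.succ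
    obtain ⟨c1, c2⟩ := cnt_facts2 (tail6 v) (-1) 0 (by decide) hm6
    rw [← hs6, hs] at c2
    have hx : cnt (tail6 v) (-1) = 4 := by omega
    have hy : cnt (tail6 v) 0 = 2 := by omega
    obtain ⟨τ, hτ⟩ := match_counts (tail6 Wa2) (tail6 v) {-1, 0} (by decide) hm6
      (by intro c hc; fin_cases hc <;> simp only [hx, hy] <;> decide)
    obtain ⟨σ, h₁, h₂⟩ := perm_tail6 v Wa2 (by rw [hd]; rfl) (by rw [h1]; rfl) τ hτ
    exact ⟨σ, Or.inr (Or.inl h₁), h₂⟩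
  · -- d = 3 : tail6 has one -2, five -1
    rw [hd] at hs hq
    norm_num at hs hq
    have hm : ∀ i, tl v i ∈ ({-2, -1, 0} : Finset ℤ) := by
      intro i
      have hb := coord_bound hs hq i
      have hb1 : -2 ≤ tl v i := by nlinarith [sq_nonneg (tl v i + 3)]
      have hb2 : tl v i ≤ 0 := by nlinarith [sq_nonneg (tl v i - 1)]
      simp only [Finset.mem_insert, Finset.mem_singleton]; omega
    have hm6 : ∀ i, tail6 v i ∈ ({-2, -1, 0} : Finset ℤ) := fun i => hm i.succ
    obtain ⟨c1, c2, c3⟩ := cnt_facts3 (tail6 v) (-2) (-1) 0 (by decide) (by decide) (by decide) hm6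
    rw [← hs6, hs] at c2
    rw [← hq6, hq] at c3
    norm_num at c2 c3
    have hx : cnt (tail6 v) (-2) = 1 := by omega
    have hy : cnt (tail6 v) (-1) = 5 := by omega
    have hz : cnt (tail6 v) 0 = 0 := by omega
    obtain ⟨τ, hτ⟩ := match_counts (tail6 Wa3) (tail6 v) {-2, -1, 0} (by decide) hm6
      (by intro c hc; fin_cases hc <;> simp only [hx, hy, hz] <;> decide)
    obtain ⟨σ, h₁, h₂⟩ := perm_tail6 v Wa3 (by rw [hd]; rfl) (by rw [h1]; rfl) τ hτ
    exact ⟨σ, Or.inr (Or.inr h₁), h₂⟩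
  · -- d = 4 : impossible since v 1 = 0
    rw [hd] at hs hq
    norm_num at hs hq
    have hb := coord_bound hs hq 0
    rw [tl_zero, h1] at hb
    omega
  · -- d = 5 : impossible since v 1 = 0
    rw [hd] at hs hq
    norm_num at hs hq
    have hb := coord_bound hs hq 0
    rw [tl_zero, h1] at hb
    omega

/-- classification of F, β case -/
lemma F_struct_beta (v : V) (hv : v ∈ F) (h1 : v 1 = -1) :
    ∃ σ : Equiv.Perm (Fin 7),
      (permAct σ v = Wb1 ∨ permAct σ v = Wb2 ∨ permAct σ v = Wb3 ∨
        permAct σ v = Wb4 ∨ permAct σ v = Wb5) ∧ permAct σ A0 = A0 := by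
  obtain ⟨hq1, hq2⟩ := hv
  rw [Bq] at hq1
  rw [Bh] at hq2
  have hs : ∑ i, tl v i = 2 - 3 * v 0 := by omega
  have hq : ∑ i, (tl v i)^2 = (v 0)^2 := by omega
  have hcs := cs7 (tl v)
  rw [hs, hq] at hcs
  have hd1 : 1 ≤ v 0 := by nlinarith [sq_nonneg (v 0)]
  have hd5 : v 0 ≤ 5 := by nlinarith [sq_nonneg (v 0 - 6)]
  have hcases : v 0 = 1 ∨ v 0 = 2 ∨ v 0 = 3 ∨ v 0 = 4 ∨ v 0 = 5 := by omega
  have hs6 := sum_tail6 v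
  have hq6 := sumsq_tail6 v
  rw [h1] at hs6 hq6
  norm_num at hs6 hq6
  rcases hcases with hd | hd | hd | hd | hd
  · -- d = 1 : tail6 all 0
    rw [hd] at hs hq
    norm_num at hs hq
    have hm : ∀ i, tl v i ∈ ({-1, 0} : Finset ℤ) := by
      intro i
      have hb := coord_bound hs hq i
      have hb1 : -1 ≤ tl v i := by nlinarith [sq_nonneg (tl v i + 2)]
      have hb2 : tl v i ≤ 0 := by nlinarith [sq_nonneg (tl v i - 1)]
      simp only [Finset.mem_insert, Finset.mem_singleton]; omega
    have hm6 : ∀ i, tail6 v i ∈ ({-1, 0} : Finset ℤ) := fun i => hm i.succ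
    obtain ⟨c1, c2⟩ := cnt_facts2 (tail6 v) (-1) 0 (by decide) hm6
    rw [show ∑ i, tail6 v i = (0:ℤ) by omega] at c2
    have hx : cnt (tail6 v) (-1) = 0 := by omega
    have hy : cnt (tail6 v) 0 = 6 := by omega
    obtain ⟨τ, hτ⟩ := match_counts (tail6 Wb1) (tail6 v) {-1, 0} (by decide) hm6
      (by intro c hc; fin_cases hc <;> simp only [hx, hy] <;> decide)
    obtain ⟨σ, h₁, h₂⟩ := perm_tail6 v Wb1 (by rw [hd]; rfl) (by rw [h1]; rfl) τ hτ
    exact ⟨σ, Or.inl h₁, h₂⟩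
  · -- d = 2 : tail6 has three -1, three 0
    rw [hd] at hs hq
    norm_num at hs hq
    have hm : ∀ i, tl v i ∈ ({-1, 0} : Finset ℤ) := by
      intro i
      have hb := coord_bound hs hq i
      have hb1 : -1 ≤ tl v i := by nlinarith [sq_nonneg (tl v i + 2)]
      have hb2 : tl v i ≤ 0 := by nlinarith [sq_nonneg (tl v i - 1)]
      simp only [Finset.mem_insert, Finset.mem_singleton]; omega
    have hm6 : ∀ i, tail6 v i ∈ ({-1, 0} : Finset ℤ) := fun i => hm i.succ
    obtain ⟨c1, c2⟩ := cnt_facts2 (tail6 v) (-1) 0 (by decide) hm6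
    rw [show ∑ i, tail6 v i = (-3:ℤ) by omega] at c2
    have hx : cnt (tail6 v) (-1) = 3 := by omega
    have hy : cnt (tail6 v) 0 = 3 := by omega
    obtain ⟨τ, hτ⟩ := match_counts (tail6 Wb2) (tail6 v) {-1, 0} (by decide) hm6
      (by intro c hc; fin_cases hc <;> simp only [hx, hy] <;> decide)
    obtain ⟨σ, h₁, h₂⟩ := perm_tail6 v Wb2 (by rw [hd]; rfl) (by rw [h1]; rfl) τ hτ
    exact ⟨σ, Or.inr (Or.inl h₁), h₂⟩
  · -- d = 3 : tail6 has one -2, four -1, one 0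
    rw [hd] at hs hq
    norm_num at hs hq
    have hm : ∀ i, tl v i ∈ ({-2, -1, 0} : Finset ℤ) := by
      intro i
      have hb := coord_bound hs hq i
      have hb1 : -2 ≤ tl v i := by nlinarith [sq_nonneg (tl v i + 3)]
      have hb2 : tl v i ≤ 0 := by nlinarith [sq_nonneg (tl v i - 1)]
      simp only [Finset.mem_insert, Finset.mem_singleton]; omega
    have hm6 : ∀ i, tail6 v i ∈ ({-2, -1, 0} : Finset ℤ) := fun i => hm i.succ
    obtain ⟨c1, c2, c3⟩ := cnt_facts3 (tail6 v) (-2) (-1) 0 (by decide) (by decide) (by decide) hm6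
    rw [show ∑ i, tail6 v i = (-6:ℤ) by omega] at c2
    rw [show ∑ i, (tail6 v i)^2 = (8:ℤ) by omega] at c3
    norm_num at c2 c3
    have hx : cnt (tail6 v) (-2) = 1 := by omega
    have hy : cnt (tail6 v) (-1) = 4 := by omega
    have hz : cnt (tail6 v) 0 = 1 := by omega
    obtain ⟨τ, hτ⟩ := match_counts (tail6 Wb3) (tail6 v) {-2, -1, 0} (by decide) hm6
      (by intro c hc; fin_cases hc <;> simp only [hx, hy, hz] <;> decide)
    obtain ⟨σ, h₁, h₂⟩ := perm_tail6 v Wb3 (by rw [hd]; rfl) (by rw [h1]; rfl) τ hτ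
    exact ⟨σ, Or.inr (Or.inr (Or.inl h₁)), h₂⟩
  · -- d = 4 : tail6 has three -2, three -1
    rw [hd] at hs hq
    norm_num at hs hq
    have hm : ∀ i, tl v i ∈ ({-2, -1} : Finset ℤ) := by
      intro i
      have hb := coord_bound hs hq i
      have hb1 : -2 ≤ tl v i := by nlinarith [sq_nonneg (tl v i + 3)]
      have hb2 : tl v i ≤ -1 := by nlinarith [sq_nonneg (tl v i)]
      simp only [Finset.mem_insert, Finset.mem_singleton]; omega
    have hm6 : ∀ i, tail6 v i ∈ ({-2, -1} : Finset ℤ) := fun i => hm i.succ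
    obtain ⟨c1, c2⟩ := cnt_facts2 (tail6 v) (-2) (-1) (by decide) hm6
    rw [show ∑ i, tail6 v i = (-9:ℤ) by omega] at c2
    have hx : cnt (tail6 v) (-2) = 3 := by omega
    have hy : cnt (tail6 v) (-1) = 3 := by omega
    obtain ⟨τ, hτ⟩ := match_counts (tail6 Wb4) (tail6 v) {-2, -1} (by decide) hm6
      (by intro c hc; fin_cases hc <;> simp only [hx, hy] <;> decide)
    obtain ⟨σ, h₁, h₂⟩ := perm_tail6 v Wb4 (by rw [hd]; rfl) (by rw [h1]; rfl) τ hτ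
    exact ⟨σ, Or.inr (Or.inr (Or.inr (Or.inl h₁))), h₂⟩
  · -- d = 5 : tail6 all -2
    rw [hd] at hs hq
    norm_num at hs hq
    have hm : ∀ i, tl v i ∈ ({-2, -1} : Finset ℤ) := by
      intro i
      have hb := coord_bound hs hq i
      have hb1 : -2 ≤ tl v i := by nlinarith [sq_nonneg (tl v i + 3)]
      have hb2 : tl v i ≤ -1 := by nlinarith [sq_nonneg (tl v i)]
      simp only [Finset.mem_insert, Finset.mem_singleton]; omega
    have hm6 : ∀ i, tail6 v i ∈ ({-2, -1} : Finset ℤ) := fun i => hm i.succ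
    obtain ⟨c1, c2⟩ := cnt_facts2 (tail6 v) (-2) (-1) (by decide) hm6
    rw [show ∑ i, tail6 v i = (-12:ℤ) by omega] at c2
    have hx : cnt (tail6 v) (-2) = 6 := by omega
    have hy : cnt (tail6 v) (-1) = 0 := by omega
    obtain ⟨τ, hτ⟩ := match_counts (tail6 Wb5) (tail6 v) {-2, -1} (by decide) hm6
      (by intro c hc; fin_cases hc <;> simp only [hx, hy] <;> decide)
    obtain ⟨σ, h₁, h₂⟩ := perm_tail6 v Wb5 (by rw [hd]; rfl) (by rw [h1]; rfl) τ hτ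
    exact ⟨σ, Or.inr (Or.inr (Or.inr (Or.inr h₁))), h₂⟩

/-! ### concrete reduction words -/

def r1 : V := ![1,-1,-1,-1,0,0,0,0]
lemma hr1 : B r1 r1 = -2 := by decide
lemma hr1h : B r1 hh = 0 := by decide
def r2 : V := ![1,0,-1,-1,-1,0,0,0]
lemma hr2 : B r2 r2 = -2 := by decide
lemma hr2h : B r2 hh = 0 := by decide

def pL1 : Equiv.Perm (Fin 7) := Equiv.swap 0 2
def pL2 : Equiv.Perm (Fin 7) := Equiv.swap 0 3 * Equiv.swap 1 4
def pL3 : Equiv.Perm (Fin 7) :=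
  ⟨![0,3,4,5,6,1,2], ![0,5,6,1,2,3,4], by decide, by decide⟩
def pa2 : Equiv.Perm (Fin 7) := Equiv.swap 1 4
def pa3 : Equiv.Perm (Fin 7) :=
  ⟨![0,1,4,5,6,2,3], ![0,1,5,6,2,3,4], by decide, by decide⟩
def pb3 : Equiv.Perm (Fin 7) :=
  ⟨![0,1,4,5,2,3,6], ![0,1,4,5,2,3,6], by decide, by decide⟩
def pb4 : Equiv.Perm (Fin 7) :=
  ⟨![0,4,5,6,1,2,3], ![0,4,5,6,1,2,3], by decide, by decide⟩

def gL1 : V ≃ₗ[ℤ] V := permAct pL1 * reflV r1 hr1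
def gL2 : V ≃ₗ[ℤ] V := permAct pL2 * reflV r1 hr1
def gL3 : V ≃ₗ[ℤ] V := permAct pL3 * reflV r1 hr1
def gVa2 : V ≃ₗ[ℤ] V := permAct pa2 * reflV r2 hr2
def gVa3 : V ≃ₗ[ℤ] V := permAct pa3 * reflV r2 hr2
def gVb2 : V ≃ₗ[ℤ] V := reflV r2 hr2
def gVb3 : V ≃ₗ[ℤ] V := permAct pb3 * reflV r2 hr2
def gVb4 : V ≃ₗ[ℤ] V := permAct pb4 * reflV r2 hr2
def gVb5 : V ≃ₗ[ℤ] V := permAct pb4 * reflV r2 hr2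

lemma gL1_mem : gL1 ∈ G := mul_mem (permAct_mem _) (reflV_mem _ _ hr1h)
lemma gL2_mem : gL2 ∈ G := mul_mem (permAct_mem _) (reflV_mem _ _ hr1h)
lemma gL3_mem : gL3 ∈ G := mul_mem (permAct_mem _) (reflV_mem _ _ hr1h)
lemma gVa2_mem : gVa2 ∈ G := mul_mem (permAct_mem _) (reflV_mem _ _ hr2h)
lemma gVa3_mem : gVa3 ∈ G := mul_mem (permAct_mem _) (reflV_mem _ _ hr2h)
lemma gVb2_mem : gVb2 ∈ G := reflV_mem _ _ hr2h
lemma gVb3_mem : gVb3 ∈ G := mul_mem (permAct_mem _) (reflV_mem _ _ hr2h)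
lemma gVb4_mem : gVb4 ∈ G := mul_mem (permAct_mem _) (reflV_mem _ _ hr2h)
lemma gVb5_mem : gVb5 ∈ G := mul_mem (permAct_mem _) (reflV_mem _ _ hr2h)

lemma gL1_eval : gL1 A1 = A0 := by decide
lemma gL2_eval : gL2 A2 = A1 := by decide
lemma gL3_eval : gL3 A3 = A2 := by decide
lemma gVa2_eval : gVa2 Wa2 = Wa1 := by decide
lemma gVa2_fix : gVa2 A0 = A0 := by decide
lemma gVa3_eval : gVa3 Wa3 = Wa2 := by decide
lemma gVa3_fix : gVa3 A0 = A0 := by decide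
lemma gVb2_eval : gVb2 Wb2 = Wb1 := by decide
lemma gVb2_fix : gVb2 A0 = A0 := by decide
lemma gVb3_eval : gVb3 Wb3 = Wb2 := by decide
lemma gVb3_fix : gVb3 A0 = A0 := by decide
lemma gVb4_eval : gVb4 Wb4 = Wb2 := by decide
lemma gVb4_fix : gVb4 A0 = A0 := by decide
lemma gVb5_eval : gVb5 Wb5 = Wb4 := by decide
lemma gVb5_fix : gVb5 A0 = A0 := by decide

/-! ### reduction lemmas -/

lemma toA0 (l : V) (hl : l ∈ L) : ∃ g ∈ G, g l = A0 := by
  obtain ⟨σ, h⟩ := L_struct l hl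
  rcases h with h | h | h | h
  · exact ⟨permAct σ, permAct_mem σ, h⟩
  · exact ⟨gL1 * permAct σ, mul_mem gL1_mem (permAct_mem σ),
      by rw [mulApply, h, gL1_eval]⟩
  · exact ⟨gL1 * gL2 * permAct σ, mul_mem (mul_mem gL1_mem gL2_mem) (permAct_mem σ),
      by rw [mulApply, h, mulApply, gL2_eval, gL1_eval]⟩
  · exact ⟨gL1 * gL2 * gL3 * permAct σ,
      mul_mem (mul_mem (mul_mem gL1_mem gL2_mem) gL3_mem) (permAct_mem σ),
      by rw [mulApply, h, mulApply, mulApply, gL3_eval, gL2_eval, gL1_eval]⟩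

lemma BA0 (v : V) : B A0 v = - v 1 := by
  unfold B
  rw [Fin.sum_univ_seven]
  show (0:ℤ) * v 0 - (1 * v 1 + 0 * v 2 + 0 * v 3 + 0 * v 4 + 0 * v 5 + 0 * v 6 + 0 * v 7)
      = - v 1
  ring

lemma alpha0_red (v : V) (hv : v ∈ F) (hB : B A0 v = 0) :
    ∃ g ∈ G, g A0 = A0 ∧ g v = Wa1 := by
  have h1 : v 1 = 0 := by rw [BA0] at hB; omega
  obtain ⟨σ, h, hfix⟩ := F_struct_alpha v hv h1
  rcases h with h | h | h
  · exact ⟨permAct σ, permAct_mem σ, hfix, h⟩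
  · exact ⟨gVa2 * permAct σ, mul_mem gVa2_mem (permAct_mem σ),
      by rw [mulApply, hfix, gVa2_fix], by rw [mulApply, h, gVa2_eval]⟩
  · exact ⟨gVa2 * gVa3 * permAct σ, mul_mem (mul_mem gVa2_mem gVa3_mem) (permAct_mem σ),
      by rw [mulApply, hfix, mulApply, gVa3_fix, gVa2_fix],
      by rw [mulApply, h, mulApply, gVa3_eval, gVa2_eval]⟩

lemma beta_red (v : V) (hv : v ∈ F) (hB : B A0 v = 1) :
    ∃ g ∈ G, g A0 = A0 ∧ g v = Wb1 := by
  have h1 : v 1 = -1 := by rw [BA0] at hB; omega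
  obtain ⟨σ, h, hfix⟩ := F_struct_beta v hv h1
  rcases h with h | h | h | h | h
  · exact ⟨permAct σ, permAct_mem σ, hfix, h⟩
  · exact ⟨gVb2 * permAct σ, mul_mem gVb2_mem (permAct_mem σ),
      by rw [mulApply, hfix, gVb2_fix], by rw [mulApply, h, gVb2_eval]⟩
  · exact ⟨gVb2 * gVb3 * permAct σ, mul_mem (mul_mem gVb2_mem gVb3_mem) (permAct_mem σ),
      by rw [mulApply, hfix, mulApply, gVb3_fix, gVb2_fix],
      by rw [mulApply, h, mulApply, gVb3_eval, gVb2_eval]⟩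
  · exact ⟨gVb2 * gVb4 * permAct σ, mul_mem (mul_mem gVb2_mem gVb4_mem) (permAct_mem σ),
      by rw [mulApply, hfix, mulApply, gVb4_fix, gVb2_fix],
      by rw [mulApply, h, mulApply, gVb4_eval, gVb2_eval]⟩
  · exact ⟨gVb2 * gVb4 * gVb5 * permAct σ,
      mul_mem (mul_mem (mul_mem gVb2_mem gVb4_mem) gVb5_mem) (permAct_mem σ),
      by rw [mulApply, hfix, mulApply, mulApply, gVb5_fix, gVb4_fix, gVb2_fix],
      by rw [mulApply, h, mulApply, mulApply, gVb5_eval, gVb4_eval, gVb2_eval]⟩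

lemma g_preserves_F (g : V ≃ₗ[ℤ] V) (hg : g ∈ G) {v : V} (hv : v ∈ F) : g v ∈ F := by
  refine ⟨by rw [hg.1]; exact hv.1, ?_⟩
  have : B (g v) hh = B v hh := by
    conv_lhs => rw [← hg.2]
    rw [hg.1]
  rw [this]; exact hv.2

lemma pair_red_alpha (l v : V) (hl : l ∈ L) (hv : v ∈ F) (ht : B l v = 0) :
    ∃ g ∈ G, g l = A0 ∧ g v = Wa1 := by
  obtain ⟨g1, hg1G, hg1⟩ := toA0 l hl
  have hv' : g1 v ∈ F := g_preserves_F g1 hg1G hv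
  have hB : B A0 (g1 v) = 0 := by rw [← hg1, hg1G.1]; exact ht
  obtain ⟨g2, hg2G, hg2A0, hg2v⟩ := alpha0_red (g1 v) hv' hB
  exact ⟨g2 * g1, mul_mem hg2G hg1G,
    by rw [mulApply, hg1, hg2A0], by rw [mulApply, hg2v]⟩

lemma pair_red_beta (l v : V) (hl : l ∈ L) (hv : v ∈ F) (ht : B l v = 1) :
    ∃ g ∈ G, g l = A0 ∧ g v = Wb1 := by
  obtain ⟨g1, hg1G, hg1⟩ := toA0 l hl
  have hv' : g1 v ∈ F := g_preserves_F g1 hg1G hv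
  have hB : B A0 (g1 v) = 1 := by rw [← hg1, hg1G.1]; exact ht
  obtain ⟨g2, hg2G, hg2A0, hg2v⟩ := beta_red (g1 v) hv' hB
  exact ⟨g2 * g1, mul_mem hg2G hg1G,
    by rw [mulApply, hg1, hg2A0], by rw [mulApply, hg2v]⟩

/-! ### the range of intersection numbers -/

lemma B_tl (l v : V) : B l v = l 0 * v 0 - ∑ i, tl l i * tl v i := rfl

lemma t_lower (l v : V) (hl : l ∈ L) (hv : v ∈ F) : 0 ≤ B l v := by
  obtain ⟨hl1, hl2⟩ := hl
  obtain ⟨hv1, hv2⟩ := hv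
  rw [Bq] at hl1 hv1
  rw [Bh] at hl2 hv2
  set c : Fin 7 → ℤ := fun i => 2 * tl v i - 2 * tl l i + 1 with hc
  have hcs := cs7 c
  have hsum : ∑ i, c i = 2 * (∑ i, tl v i) - 2 * (∑ i, tl l i) + 7 := by
    rw [hc]
    rw [Finset.sum_add_distrib, Finset.sum_sub_distrib, ← Finset.mul_sum, ← Finset.mul_sum]
    norm_num
  have hsq : ∑ i, (c i)^2 = 4 * (∑ i, (tl v i)^2) + 4 * (∑ i, (tl l i)^2)
      - 8 * (∑ i, tl l i * tl v i) + 4 * (∑ i, tl v i) - 4 * (∑ i, tl l i) + 7 := by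
    rw [Finset.sum_congr rfl (fun i _ => show (c i)^2
      = 4 * (tl v i)^2 + 4 * (tl l i)^2 - 8 * (tl l i * tl v i) + 4 * tl v i - 4 * tl l i + 1
      from by rw [hc]; ring)]
    simp only [Finset.sum_add_distrib, Finset.sum_sub_distrib, ← Finset.mul_sum]
    norm_num
  rw [hsum, hsq] at hcs
  have hcons : 0 ≤ (v 0 - l 0 - 1) * (v 0 - l 0 - 2) := by
    rcases le_or_gt (v 0 - l 0) 1 with h | h
    · have h1 : (0:ℤ) ≤ -(v 0 - l 0 - 1) := by omega
      have h2 : (0:ℤ) ≤ -(v 0 - l 0 - 2) := by omega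
      nlinarith [mul_nonneg h1 h2]
    · exact mul_nonneg (by omega) (by omega)
  have hT1 : ∑ i, tl v i = 2 - 3 * v 0 := by omega
  have hS1 : ∑ i, tl l i = 1 - 3 * l 0 := by omega
  have hT2 : ∑ i, (tl v i)^2 = (v 0)^2 := by linarith
  have hS2 : ∑ i, (tl l i)^2 = (l 0)^2 + 1 := by linarith
  rw [hT1, hS1, hT2, hS2] at hcs
  have key : 56 * (l 0 * v 0 - ∑ i, tl l i * tl v i) ≥ -40 := by
    nlinarith [hcs, hcons]
  rw [B_tl]
  rcases le_or_gt 0 (l 0 * v 0 - ∑ i, tl l i * tl v i) with h | h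
  · exact h
  · linarith

lemma Bliota (l v : V) (hl : l ∈ L) (hv : v ∈ F) : B l (iota v) = 2 - B l v := by
  rw [B_iota_right, hv.2, hl.2]; ring

lemma t_upper (l v : V) (hl : l ∈ L) (hv : v ∈ F) : B l v ≤ 2 := by
  have h := t_lower l (iota v) hl (iota_mem_F hv)
  rw [Bliota l v hl hv] at h
  linarith

lemma part1 (l : V) (hl : l ∈ L) (v : V) (hv : v ∈ F) :
    Xor' (TypeAlpha l v) (TypeBeta l v) := by
  have h1 := t_lower l v hl hv
  have h2 := t_upper l v hl hv
  have h3 := Bliota l v hl hv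
  unfold Xor' Xor TypeAlpha TypeBeta
  rw [h3]
  set t := B l v with ht
  omega

lemma part2 (l : V) (hl : l ∈ L) (v : V) (hv : v ∈ F) :
    TypeAlpha l v ↔ ∃ a ∈ L, l + a = v ∨ l + a = iota v := by
  constructor
  · rintro (⟨h0, _⟩ | ⟨_, h0⟩)
    · refine ⟨v - l, ⟨?_, ?_⟩, Or.inl (by abel)⟩
      · rw [B_sub_left, B_sub_right, B_sub_right, B_symm v l, hv.1, hl.1, h0]; ring
      · rw [B_sub_left, hv.2, hl.2]; ring
    · refine ⟨iota v - l, ⟨?_, ?_⟩, Or.inr (by abel)⟩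
      · rw [B_sub_left, B_sub_right, B_sub_right, B_symm (iota v) l,
          (iota_mem_F hv).1, hl.1, h0]; ring
      · rw [B_sub_left, (iota_mem_F hv).2, hl.2]; ring
  · rintro ⟨a, ha, h | h⟩
    · have hq : B (l + a) (l + a) = 0 := by rw [h]; exact hv.1
      rw [B_add_left, B_add_right, B_add_right, B_symm a l, hl.1, ha.1] at hq
      have hla : B l a = 1 := by linarith
      have h0 : B l v = 0 := by rw [← h, B_add_right, hl.1, hla]; ring
      exact Or.inl ⟨h0, by rw [Bliota l v hl hv, h0]; ring⟩
    · have hq : B (l + a) (l + a) = 0 := by rw [h]; exact (iota_mem_F hv).1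
      rw [B_add_left, B_add_right, B_add_right, B_symm a l, hl.1, ha.1] at hq
      have hla : B l a = 1 := by linarith
      have h0 : B l (iota v) = 0 := by rw [← h, B_add_right, hl.1, hla]; ring
      have h2 : B l v = 2 := by
        have := Bliota l v hl hv
        linarith
      exact Or.inr ⟨h2, h0⟩

lemma part3 (l : V) (hl : l ∈ L) (v : V) (hv : v ∈ F) :
    (TypeAlpha l v ↔ TypeAlpha (iota l) v) ∧ (TypeAlpha l v ↔ TypeAlpha l (iota v)) := by
  have hbiv : B l (iota v) = 2 - B l v := Bliota l v hl hv
  have hbil : B (iota l) v = 2 - B l v := by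
    rw [B_iota_left, B_symm hh v, hv.2, hl.2]; ring
  have hbii : B (iota l) (iota v) = B l v := by
    rw [B_iota_right, hv.2, (iota_mem_L hl).2, hbil]; ring
  have hivv : B l (iota (iota v)) = B l v := by rw [iota_iota]
  unfold TypeAlpha
  rw [hbiv, hbil, hbii, hivv]
  set t := B l v with ht
  constructor <;> constructor <;> intro h <;> omega

/-- each pair (l,v) ∈ L × F is of type α or β (exactly one); type α holds
iff l + a = v or l + a = ι(v) for some a ∈ L; the type depends only on the classes in
L̄ × F̄, and G acts transitively on pairs of classes of type α and on those of type β. -/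
theorem stmt12 :
    (∀ l ∈ L, ∀ v ∈ F, Xor' (TypeAlpha l v) (TypeBeta l v)) ∧
    (∀ l ∈ L, ∀ v ∈ F, (TypeAlpha l v ↔ ∃ a ∈ L, l + a = v ∨ l + a = iota v)) ∧
    (∀ l ∈ L, ∀ v ∈ F,
      (TypeAlpha l v ↔ TypeAlpha (iota l) v) ∧ (TypeAlpha l v ↔ TypeAlpha l (iota v))) ∧
    (∀ l₁ ∈ L, ∀ v₁ ∈ F, ∀ l₂ ∈ L, ∀ v₂ ∈ F,
      TypeAlpha l₁ v₁ → TypeAlpha l₂ v₂ →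
      ∃ g ∈ G, (fun x => g x) '' ({l₁, iota l₁} : Set V) = {l₂, iota l₂} ∧
        (fun x => g x) '' ({v₁, iota v₁} : Set V) = {v₂, iota v₂}) ∧
    (∀ l₁ ∈ L, ∀ v₁ ∈ F, ∀ l₂ ∈ L, ∀ v₂ ∈ F,
      TypeBeta l₁ v₁ → TypeBeta l₂ v₂ →
      ∃ g ∈ G, (fun x => g x) '' ({l₁, iota l₁} : Set V) = {l₂, iota l₂} ∧
        (fun x => g x) '' ({v₁, iota v₁} : Set V) = {v₂, iota v₂}) := by
  refine ⟨fun l hl v hv => part1 l hl v hv, fun l hl v hv => part2 l hl v hv,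
    fun l hl v hv => part3 l hl v hv, ?_, ?_⟩
  · -- type α transitivity
    intro l₁ hl₁ v₁ hv₁ l₂ hl₂ v₂ hv₂ hA₁ hA₂
    have key : ∀ (l v : V), v ∈ F → TypeAlpha l v →
        ∃ v', v' ∈ F ∧ B l v' = 0 ∧ ({v, iota v} : Set V) = {v', iota v'} := by
      intro l v hv hA
      rcases hA with ⟨h0, _⟩ | ⟨_, h0⟩
      · exact ⟨v, hv, h0, rfl⟩
      · exact ⟨iota v, iota_mem_F hv, h0, by rw [iota_iota]; exact Set.pair_comm _ _⟩
    obtain ⟨v₁', hv₁', ht₁, hset₁⟩ := key l₁ v₁ hv₁ hA₁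
    obtain ⟨v₂', hv₂', ht₂, hset₂⟩ := key l₂ v₂ hv₂ hA₂
    obtain ⟨g1, hg1G, hg1l, hg1v⟩ := pair_red_alpha l₁ v₁' hl₁ hv₁' ht₁
    obtain ⟨g2, hg2G, hg2l, hg2v⟩ := pair_red_alpha l₂ v₂' hl₂ hv₂' ht₂
    have hgG : g2⁻¹ * g1 ∈ G := mul_mem (inv_mem hg2G) hg1G
    have hgl : (g2⁻¹ * g1) l₁ = l₂ := by
      rw [mulApply, hg1l, invApply]
      exact (LinearEquiv.symm_apply_eq g2).mpr hg2l.symm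
    have hgv : (g2⁻¹ * g1) v₁' = v₂' := by
      rw [mulApply, hg1v, invApply]
      exact (LinearEquiv.symm_apply_eq g2).mpr hg2v.symm
    refine ⟨g2⁻¹ * g1, hgG, ?_, ?_⟩
    · rw [Set.image_pair, hgl, g_iota _ hgG, hgl]
    · rw [hset₁, Set.image_pair, hgv, g_iota _ hgG, hgv, ← hset₂]
  · -- type β transitivity
    intro l₁ hl₁ v₁ hv₁ l₂ hl₂ v₂ hv₂ hB₁ hB₂
    obtain ⟨g1, hg1G, hg1l, hg1v⟩ := pair_red_beta l₁ v₁ hl₁ hv₁ hB₁.1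
    obtain ⟨g2, hg2G, hg2l, hg2v⟩ := pair_red_beta l₂ v₂ hl₂ hv₂ hB₂.1
    have hgG : g2⁻¹ * g1 ∈ G := mul_mem (inv_mem hg2G) hg1G
    have hgl : (g2⁻¹ * g1) l₁ = l₂ := by
      rw [mulApply, hg1l, invApply]
      exact (LinearEquiv.symm_apply_eq g2).mpr hg2l.symm
    have hgv : (g2⁻¹ * g1) v₁ = v₂ := by
      rw [mulApply, hg1v, invApply]
      exact (LinearEquiv.symm_apply_eq g2).mpr hg2v.symm
    refine ⟨g2⁻¹ * g1, hgG, ?_, ?_⟩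
    · rw [Set.image_pair, hgl, g_iota _ hgG, hgl]
    · rw [Set.image_pair, hgv, g_iota _ hgG, hgv]
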